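/- Consequently, every nonzero L_{n+1}-submodule of U(P)(1 ⊗ V) contains the subspace 1 ⊗ V. -/

import Mathlib

open MvPolynomial TensorProduct

noncomputable section

variable (F : Type) [Field F] (n : ℕ)

/-- Standard matrix units E_{i,j} of gl(n,F). -/
def EE (i j : Fin n) : Matrix (Fin n) (Fin n) F := Matrix.single i j 1

/-- x_i ∂_{x_j} as a linear endomorphism of F[x_1,…,x_n]. -/
def xdL (i j : Fin n) : MvPolynomial (Fin n) F →ₗ[F] MvPolynomial (Fin n) F :=
  (((X i : MvPolynomial (Fin n) F) • pderiv j :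
    Derivation F (MvPolynomial (Fin n) F) (MvPolynomial (Fin n) F))).toLinearMap

/-- ∂_{x_j}. -/
def ddL (j : Fin n) : MvPolynomial (Fin n) F →ₗ[F] MvPolynomial (Fin n) F :=
  ((pderiv j : Derivation F (MvPolynomial (Fin n) F) (MvPolynomial (Fin n) F))).toLinearMap

/-- p_i = x_i Σ_r x_r ∂_{x_r}. -/
def ptL (i : Fin n) : MvPolynomial (Fin n) F →ₗ[F] MvPolynomial (Fin n) F :=
  (((X i : MvPolynomial (Fin n) F) •
      ∑ r : Fin n, ((X r : MvPolynomial (Fin n) F) • pderiv r :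
        Derivation F (MvPolynomial (Fin n) F) (MvPolynomial (Fin n) F)) :
    Derivation F (MvPolynomial (Fin n) F) (MvPolynomial (Fin n) F))).toLinearMap

variable (V : Type) [AddCommGroup V] [Module F V]
variable (ρ : Matrix (Fin n) (Fin n) F →ₗ[F] Module.End F V)

/-- Action (3.10) of x_i∂_{x_j} on A ⊗ V. -/
def opX (i j : Fin n) : Module.End F (MvPolynomial (Fin n) F ⊗[F] V) :=
  TensorProduct.map (xdL F n i j) LinearMap.id +
    TensorProduct.map LinearMap.id (ρ (EE F n i j))

/-- Action (3.11) of ∂_{x_i} on A ⊗ V. -/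
def opD (i : Fin n) : Module.End F (MvPolynomial (Fin n) F ⊗[F] V) :=
  TensorProduct.map (ddL F n i) LinearMap.id

/-- Action (3.12) of p_i on A ⊗ V. -/
def opP (i : Fin n) : Module.End F (MvPolynomial (Fin n) F ⊗[F] V) :=
  TensorProduct.map (ptL F n i) LinearMap.id +
    TensorProduct.map (LinearMap.mulLeft F (X i)) (ρ (1 : Matrix (Fin n) (Fin n) F)) +
    ∑ j : Fin n, TensorProduct.map (LinearMap.mulLeft F (X j)) (ρ (EE F n i j))

/-- The subspace U(P)(1 ⊗ V). -/
def UP : Submodule F (MvPolynomial (Fin n) F ⊗[F] V) :=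
  Submodule.span F
    {w | ∃ (l : List (Fin n)) (v : V),
      w = l.foldr (fun t u => opP F n V ρ t u) ((1 : MvPolynomial (Fin n) F) ⊗ₜ[F] v)}

/-- The degree-k homogeneous component (A ⊗ V)_{⟨k⟩}. -/
def Deg (k : ℕ) : Submodule F (MvPolynomial (Fin n) F ⊗[F] V) :=
  Submodule.span F
    {w | ∃ (c : Fin n →₀ ℕ) (v : V), (∑ i, c i) = k ∧
      w = (monomial c (1 : F)) ⊗ₜ[F] v}

/-- W is an L_{n+1}-submodule of A ⊗ V. -/
def IsLSubmodule (W : Submodule F (MvPolynomial (Fin n) F ⊗[F] V)) : Prop :=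
  ∀ w ∈ W, (∀ i j : Fin n, opX F n V ρ i j w ∈ W) ∧
    (∀ i : Fin n, opD F n V i w ∈ W) ∧ (∀ i : Fin n, opP F n V ρ i w ∈ W)

/-- ρ is a representation of gl(n,F). -/
def IsGlRep : Prop :=
  ∀ X Y : Matrix (Fin n) (Fin n) F, ρ (X * Y - Y * X) = ρ X * ρ Y - ρ Y * ρ X

/-- Irreducibility of the gl(n)-module V. -/
def IsIrreducibleRep : Prop :=
  (∃ v : V, v ≠ 0) ∧
  ∀ U : Submodule F V, (∀ X : Matrix (Fin n) (Fin n) F, ∀ u ∈ U, ρ X u ∈ U) →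
    U = ⊥ ∨ U = ⊤

/-- v is a highest weight vector of weight μ in V. -/
def IsHWVector (μ : Fin n → F) (v : V) : Prop :=
  v ≠ 0 ∧ (∀ i : Fin n, ρ (EE F n i i) v = μ i • v) ∧
    ∀ i j : Fin n, i < j → ρ (EE F n i j) v = 0

/-- The index set I(μ,j) of (2.11). -/
def Iset (μ : Fin n → F) (j : ℕ) : Set (Fin n → ℕ) :=
  {c | (∑ i, c i) = j ∧
    ∀ s t : Fin n, (s : ℕ) + 1 = (t : ℕ) →
      ∃ m : ℕ, μ s - μ t = (m : F) ∧ c t ≤ m}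

/-- The scalar q_c of Lemma 3.2.3. -/
def qc (μ : Fin n → F) (c : Fin n → ℕ) : F :=
  ∏ s : Fin n, ∏ i ∈ Finset.range (c s),
    (μ s + (∑ j, μ j) - ((s : ℕ) + 1) + (i + 1))


section Aux

variable {F n} {V}

/-- The coefficient of a partial derivative. -/
lemma coeff_pderiv' (i : Fin n) (c : Fin n →₀ ℕ) (p : MvPolynomial (Fin n) F) :
    coeff c ((pderiv i) p) = ((c i : F) + 1) * coeff (c + Finsupp.single i 1) p := by
  induction p using MvPolynomial.induction_on' with
  | monomial s a =>
    rw [pderiv_monomial, coeff_monomial, coeff_monomial]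
    by_cases h : s = c + Finsupp.single i 1
    · subst h
      have h1 : (c + Finsupp.single i 1) - Finsupp.single i 1 = c :=
        add_tsub_cancel_right _ _
      have h2 : (c + Finsupp.single i 1 : Fin n →₀ ℕ) i = c i + 1 := by simp
      rw [if_pos h1, h2]
      simp only [if_true]
      push_cast
      ring
    · rw [if_neg h]
      by_cases h' : s - Finsupp.single i 1 = c
      · have hsi : s i = 0 := by
          by_contra hs
          apply h
          ext j
          have hcj : c j = s j - (Finsupp.single i 1) j := by
            rw [← h']; rfl
          by_cases hj : j = i
          · subst hj
            simp only [Finsupp.add_apply, Finsupp.single_eq_same] at hcj ⊢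
            omega
          · simp only [Finsupp.add_apply,
              Finsupp.single_eq_of_ne hj] at hcj ⊢
            omega
        rw [if_pos h', hsi]
        push_cast
        ring
      · rw [if_neg h', mul_zero]
  | add p q hp hq =>
    simp [map_add, coeff_add, hp, hq, mul_add]

/-- The linear isomorphism A ⊗ V ≃ ((Fin n →₀ ℕ) →₀ V). -/
def eAV : (MvPolynomial (Fin n) F ⊗[F] V) ≃ₗ[F] ((Fin n →₀ ℕ) →₀ V) :=
  (TensorProduct.congr (MvPolynomial.basisMonomials (Fin n) F).repr (LinearEquiv.refl F V)).trans
    (TensorProduct.finsuppScalarLeft F V (Fin n →₀ ℕ))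

lemma eAV_tmul (q : MvPolynomial (Fin n) F) (v : V) (c : Fin n →₀ ℕ) :
    (eAV (q ⊗ₜ[F] v) : (Fin n →₀ ℕ) →₀ V) c = coeff c q • v :=
  by
    show (TensorProduct.finsuppScalarLeft F V (Fin n →₀ ℕ)
      ((MvPolynomial.basisMonomials (Fin n) F).repr q ⊗ₜ[F] v)) c = _
    rw [TensorProduct.finsuppScalarLeft_apply_tmul_apply]
    rfl

lemma eAV_opD (i : Fin n) (c : Fin n →₀ ℕ) (w : MvPolynomial (Fin n) F ⊗[F] V) :
    (eAV (opD F n V i w)) c = (c i + 1) • (eAV w) (c + Finsupp.single i 1) := by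
  induction w using TensorProduct.induction_on with
  | zero => simp
  | tmul p v =>
    have h1 : opD F n V i (p ⊗ₜ[F] v) = ((pderiv i) p) ⊗ₜ[F] v := by
      simp [opD, ddL]
    rw [h1, eAV_tmul, eAV_tmul, coeff_pderiv', mul_smul,
      ← Nat.cast_smul_eq_nsmul F]
    push_cast
    ring_nf
  | add x y hx hy =>
    simp only [map_add, Finsupp.add_apply, hx, hy, smul_add]

lemma eAV_fold (l : List (Fin n)) (w : MvPolynomial (Fin n) F ⊗[F] V)
    (d : Fin n →₀ ℕ) :
    ∃ m : ℕ, 0 < m ∧ (eAV (l.foldr (fun t u => opD F n V t u) w)) d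
      = m • (eAV w) (d + (l.map fun i => Finsupp.single i 1).sum) := by
  induction l generalizing d with
  | nil => exact ⟨1, one_pos, by simp⟩
  | cons i l ih =>
    obtain ⟨m, hm, hmeq⟩ := ih (d + Finsupp.single i 1)
    refine ⟨(d i + 1) * m, by positivity, ?_⟩
    rw [List.foldr_cons, eAV_opD, hmeq, smul_smul, List.map_cons, List.sum_cons,
      add_assoc]

lemma sum_single_count (l : List (Fin n)) (j : Fin n) :
    ((l.map fun i => Finsupp.single i (1 : ℕ)).sum) j = l.count j := by
  induction l with
  | nil => simp
  | cons i l ih =>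
    simp only [List.map_cons, List.sum_cons, Finsupp.add_apply, ih,
      List.count_cons, Finsupp.single_apply]
    by_cases h : i = j <;> simp [h] <;> omega

lemma sum_single_toMultiset_toList (c : Fin n →₀ ℕ) :
    (((Finsupp.toMultiset c).toList.map fun i => Finsupp.single i (1 : ℕ)).sum) = c := by
  ext j
  rw [sum_single_count]
  rw [← Multiset.coe_count, Multiset.coe_toList, Finsupp.count_toMultiset]

end Aux

/-- Every nonzero L_{n+1}-submodule of U(P)(1 ⊗ V) contains the subspace 1 ⊗ V. -/
theorem nonzero_submodule_of_UP_contains_one_tensor [CharZero F] [FiniteDimensional F V]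
    (hρ : IsGlRep F n V ρ) (hirr : IsIrreducibleRep F n V ρ)
    (W : Submodule F (MvPolynomial (Fin n) F ⊗[F] V))
    (hWU : W ≤ UP F n V ρ) (hW : IsLSubmodule F n V ρ W) (hW0 : W ≠ ⊥) :
    ∀ v : V, ((1 : MvPolynomial (Fin n) F) ⊗ₜ[F] v) ∈ W := by
  classical
  obtain ⟨w, hwW, hw0⟩ := (Submodule.ne_bot_iff W).mp hW0
  have hew : (eAV w : (Fin n →₀ ℕ) →₀ V) ≠ 0 := by
    intro h
    exact hw0 ((LinearEquiv.map_eq_zero_iff eAV).mp h)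
  obtain ⟨c, hc, hmax⟩ := Finset.exists_max_image (eAV w).support
    (fun c : Fin n →₀ ℕ => ∑ i, c i) (Finsupp.support_nonempty_iff.mpr hew)
  set l : List (Fin n) := (Finsupp.toMultiset c).toList with hl
  set w' := l.foldr (fun t u => opD F n V t u) w with hw'def
  have hw'W : w' ∈ W := by
    have hall : ∀ l' : List (Fin n), l'.foldr (fun t u => opD F n V t u) w ∈ W := by
      intro l'
      induction l' with
      | nil => exact hwW
      | cons i l' ih => exact (hW _ ih).2.1 i
    exact hall l
  have hsum : (l.map fun i => Finsupp.single i (1 : ℕ)).sum = c :=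
    sum_single_toMultiset_toList c
  have hval : ∀ d : Fin n →₀ ℕ, ∃ m : ℕ, 0 < m ∧
      (eAV w') d = m • (eAV w) (d + c) := by
    intro d
    obtain ⟨m, hm, hmeq⟩ := eAV_fold l w d
    exact ⟨m, hm, by rwa [hsum] at hmeq⟩
  set v0 : V := (eAV w') 0 with hv0def
  have hv00 : v0 ≠ 0 := by
    obtain ⟨m, hm, hmeq⟩ := hval 0
    rw [hv0def, hmeq, zero_add, ← Nat.cast_smul_eq_nsmul F]
    exact smul_ne_zero (Nat.cast_ne_zero.mpr hm.ne') (Finsupp.mem_support_iff.mp hc)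
  have hzero : ∀ d : Fin n →₀ ℕ, d ≠ 0 → (eAV w') d = 0 := by
    intro d hd
    obtain ⟨m, hm, hmeq⟩ := hval d
    have h0 : (eAV w) (d + c) = 0 := by
      by_contra hne
      have hmem : d + c ∈ (eAV w).support := Finsupp.mem_support_iff.mpr hne
      have hle := hmax _ hmem
      have hsplit : (∑ i, (d + c : Fin n →₀ ℕ) i) = (∑ i, d i) + (∑ i, c i) := by
        simp [Finsupp.add_apply, Finset.sum_add_distrib]
      simp only [hsplit] at hle
      have hd0 : (∑ i, d i) = 0 := by omega
      apply hd
      ext j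
      have hj := (Finset.sum_eq_zero_iff).mp hd0 j (Finset.mem_univ j)
      simpa using hj
    rw [hmeq, h0, smul_zero]
  have hw'eq : w' = (1 : MvPolynomial (Fin n) F) ⊗ₜ[F] v0 := by
    apply eAV.injective
    ext d
    rw [eAV_tmul]
    by_cases hd : d = 0
    · subst hd
      simp
      exact hv0def.symm
    · rw [hzero d hd, coeff_one, if_neg (fun hh => hd hh.symm), zero_smul]
  have hEstep : ∀ (i j : Fin n) (u : V),
      ((1 : MvPolynomial (Fin n) F) ⊗ₜ[F] u ∈ W) →
      ((1 : MvPolynomial (Fin n) F) ⊗ₜ[F] (ρ (EE F n i j) u) ∈ W) := by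
    intro i j u hu
    have h2 := (hW _ hu).1 i j
    have h3 : opX F n V ρ i j ((1 : MvPolynomial (Fin n) F) ⊗ₜ[F] u)
        = (1 : MvPolynomial (Fin n) F) ⊗ₜ[F] (ρ (EE F n i j) u) := by
      simp [opX, xdL]
    rwa [h3] at h2
  let U : Submodule F V :=
    { carrier := {u : V | (1 : MvPolynomial (Fin n) F) ⊗ₜ[F] u ∈ W}
      add_mem' := fun {a b} ha hb => by
        have h := W.add_mem ha hb
        show (1 : MvPolynomial (Fin n) F) ⊗ₜ[F] (a + b) ∈ W
        rwa [TensorProduct.tmul_add]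
      zero_mem' := by
        show (1 : MvPolynomial (Fin n) F) ⊗ₜ[F] (0 : V) ∈ W
        rw [TensorProduct.tmul_zero]
        exact W.zero_mem
      smul_mem' := fun a u hu => by
        show (1 : MvPolynomial (Fin n) F) ⊗ₜ[F] (a • u) ∈ W
        rw [TensorProduct.tmul_smul]
        exact W.smul_mem a hu }
  have hUclosed : ∀ X : Matrix (Fin n) (Fin n) F, ∀ u ∈ U, ρ X u ∈ U := by
    intro X u hu
    have hE : ∀ i j : Fin n, ρ (EE F n i j) u ∈ U := fun i j => hEstep i j u hu
    have hX : ρ X = ∑ i : Fin n, ∑ j : Fin n, (X i j) • ρ (EE F n i j) := by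
      conv_lhs => rw [Matrix.matrix_eq_sum_single X]
      rw [map_sum]
      refine Finset.sum_congr rfl fun i _ => ?_
      rw [map_sum]
      refine Finset.sum_congr rfl fun j _ => ?_
      rw [← map_smul]
      congr 1
      rw [EE, Matrix.smul_single, smul_eq_mul, mul_one]
    have hXu : ρ X u = ∑ i : Fin n, ∑ j : Fin n, (X i j) • (ρ (EE F n i j) u) := by
      rw [hX]
      simp [LinearMap.sum_apply]
    rw [hXu]
    exact Submodule.sum_mem _ fun i _ => Submodule.sum_mem _ fun j _ =>
      Submodule.smul_mem _ _ (hE i j)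
  rcases hirr.2 U hUclosed with hbot | htop
  · exfalso
    have hv0U : v0 ∈ U := by
      show (1 : MvPolynomial (Fin n) F) ⊗ₜ[F] v0 ∈ W
      rw [← hw'eq]
      exact hw'W
    rw [hbot] at hv0U
    exact hv00 ((Submodule.mem_bot F).mp hv0U)
  · intro v
    have hv : v ∈ U := htop ▸ Submodule.mem_top
    exact hv

end
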